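/- Let A, B ⊆ ℕ and set P := H₀^A ⊗ H₀^B and Q := H₁^A ⊗ H₁^B. Then the decoding oracle d_{P,Q} is the binary meet, in the T1 degrees, of the Turing degrees of A and B: d_{P,Q} is T1-reducible to the characteristic function of A and to the characteristic function of B, and every partial function k : ℕ →. ℕ that is T1-reducible to both characteristic functions is T1-reducible to d_{P,Q}. -/

import Mathlib

open Classical in
/-- The oracle game: the list of previous answers by Merlin up to stage `i`,
for the answer sequence `s`. -/
def prefixList (s : ℕ → ℕ) (i : ℕ) : List ℕ := List.ofFn (fun j : Fin i => s j)

/-- A winning Arthur+Nimue strategy for the reduction game of the basic oracle `ℱ`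
to the basic oracle `𝒢`. -/
def Winning (ℱ 𝒢 : Set (Set ℕ)) (σ : List ℕ →. Option ℕ) (ν : Set ℕ → List ℕ → Set ℕ) : Prop :=
  (∀ F ∈ ℱ, ∀ l : List ℕ, ν F l ∈ 𝒢) ∧
  ∀ F ∈ ℱ, ∀ s : ℕ → ℕ, (∀ i, s i ∈ ν F (prefixList s i)) →
    ∃ k, (∀ i ≤ k, (σ (prefixList s i)).Dom) ∧
      (∀ i < k, none ∈ σ (prefixList s i)) ∧
      ∃ u ∈ F, some u ∈ σ (prefixList s k)

/-- The encoding of an Arthur strategy as a partial function `ℕ →. ℕ`, via the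
standard Mathlib encodings of `List ℕ` and `Option ℕ`. -/
def arthurCode (σ : List ℕ →. Option ℕ) : ℕ →. ℕ :=
  fun n => (σ (Denumerable.ofNat (List ℕ) n)).map Encodable.encode

open Classical in
/-- The decoding oracle associated to the promise problem `(P, Q)`: value `0` on `P`,
value `1` on `Q`, undefined elsewhere. -/
noncomputable def dOracle (P Q : Set ℕ) : ℕ →. ℕ :=
  fun n => ⟨n ∈ P ∪ Q, fun _ => if n ∈ Q then 1 else 0⟩

open Classical in
/-- The characteristic function of a set of naturals. -/
noncomputable def chi (A : Set ℕ) : ℕ → ℕ := fun n => if n ∈ A then 1 else 0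

/-- The coded cartesian product of two sets of naturals. -/
def tensor (P Q : Set ℕ) : Set ℕ := {x | ∃ p ∈ P, ∃ q ∈ Q, x = Nat.pair p q}

infixl:70 " ⊗ " => tensor

/-- Oracle computability, as in Mathlib's `Nat.RecursiveIn`. -/
inductive Nat.RecursiveInSingle (g : ℕ →. ℕ) : (ℕ →. ℕ) → Prop
  | zero : Nat.RecursiveInSingle g fun _ => 0
  | succ : Nat.RecursiveInSingle g Nat.succ
  | left : Nat.RecursiveInSingle g fun n => (Nat.unpair n).1
  | right : Nat.RecursiveInSingle g fun n => (Nat.unpair n).2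
  | oracle : Nat.RecursiveInSingle g g
  | pair {f h : ℕ →. ℕ} (hf : Nat.RecursiveInSingle g f) (hh : Nat.RecursiveInSingle g h) :
      Nat.RecursiveInSingle g fun n => (Nat.pair <$> f n <*> h n)
  | comp {f h : ℕ →. ℕ} (hf : Nat.RecursiveInSingle g f) (hh : Nat.RecursiveInSingle g h) :
      Nat.RecursiveInSingle g fun n => h n >>= f
  | prec {f h : ℕ →. ℕ} (hf : Nat.RecursiveInSingle g f) (hh : Nat.RecursiveInSingle g h) :
      Nat.RecursiveInSingle g
        (Nat.unpaired fun a n =>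
          n.rec (f a) fun y IH => do
            let i ← IH
            h (Nat.pair a (Nat.pair y i)))
  | rfind {f : ℕ →. ℕ} (hf : Nat.RecursiveInSingle g f) :
      Nat.RecursiveInSingle g fun a =>
        Nat.rfind fun n => (fun m => m = 0) <$> f (Nat.pair a n)

/-- `f` is T1-reducible to `g`: some partial function recursive in the oracle `g`
extends `f`. -/
def T1Reducible (f g : ℕ →. ℕ) : Prop :=
  ∃ h : ℕ →. ℕ, Nat.RecursiveInSingle g h ∧ ∀ n : ℕ, ∀ a ∈ f n, a ∈ h n

/-- `f` is T1-computable: it has a partial computable extension. -/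
def T1Computable (f : ℕ →. ℕ) : Prop :=
  ∃ h : ℕ →. ℕ, Nat.Partrec h ∧ ∀ n : ℕ, ∀ a ∈ f n, a ∈ h n

/-- Codes for oracle computations: Mathlib's `Nat.Partrec.Code` extended by an
`oracle` constructor. -/
inductive OCode : Type
  | zero : OCode
  | succ : OCode
  | left : OCode
  | right : OCode
  | oracle : OCode
  | pair : OCode → OCode → OCode
  | comp : OCode → OCode → OCode
  | prec : OCode → OCode → OCode
  | rfind' : OCode → OCode

/-- Evaluation of an oracle code relative to the oracle `g`, by the same structural
recursion as Mathlib's `Nat.Partrec.Code.eval`. -/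
def OCode.eval (g : ℕ →. ℕ) : OCode → ℕ →. ℕ
  | .zero => pure 0
  | .succ => Nat.succ
  | .left => ↑fun n : ℕ => n.unpair.1
  | .right => ↑fun n : ℕ => n.unpair.2
  | .oracle => g
  | .pair cf cg => fun n => Nat.pair <$> cf.eval g n <*> cg.eval g n
  | .comp cf cg => fun n => cg.eval g n >>= cf.eval g
  | .prec cf cg =>
    Nat.unpaired fun a n =>
      n.rec (cf.eval g a) fun y IH => do
        let i ← IH
        cg.eval g (Nat.pair a (Nat.pair y i))
  | .rfind' cf =>
    Nat.unpaired fun a m =>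
      (Nat.rfind fun n => (fun m => m = 0) <$> cf.eval g (Nat.pair a (n + m))).map (· + m)

/-- The `n`-th oracle code. -/
def OCode.ofNat : ℕ → OCode
  | 0 => .zero
  | 1 => .succ
  | 2 => .left
  | 3 => .right
  | 4 => .oracle
  | n + 5 =>
    have h1 : (n / 4).unpair.1 < n + 5 :=
      lt_of_le_of_lt (le_trans (Nat.unpair_left_le _) (Nat.div_le_self _ _)) (by omega)
    have h2 : (n / 4).unpair.2 < n + 5 :=
      lt_of_le_of_lt (le_trans (Nat.unpair_right_le _) (Nat.div_le_self _ _)) (by omega)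
    if n % 4 = 0 then .pair (OCode.ofNat (n / 4).unpair.1) (OCode.ofNat (n / 4).unpair.2)
    else if n % 4 = 1 then .comp (OCode.ofNat (n / 4).unpair.1) (OCode.ofNat (n / 4).unpair.2)
    else if n % 4 = 2 then .prec (OCode.ofNat (n / 4).unpair.1) (OCode.ofNat (n / 4).unpair.2)
    else .rfind' (OCode.ofNat (n / 4).unpair.1)

/-- `φ_e^g`: the evaluation of the `e`-th oracle code relative to the oracle `g`. -/
def phi (g : ℕ →. ℕ) (e : ℕ) : ℕ →. ℕ := (OCode.ofNat e).eval g

/-- `H_i^A`: the set of (codes of) oracle programs which, run with the characteristic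
function of `A` as oracle, halt on input `0` with output `i`. -/
def Hset (A : Set ℕ) (i : ℕ) : Set ℕ := {e : ℕ | (i : ℕ) ∈ phi (chi A) e 0}


namespace Meet16

open Nat.Partrec (Code)
open Nat.Partrec.Code

theorem bindP_some (a : ℕ) (f : ℕ →. ℕ) : Part.some a >>= f = f a := Part.bind_some a f

theorem mem_bindP {x : Part ℕ} {f : ℕ →. ℕ} {a : ℕ} : a ∈ x >>= f ↔ ∃ b ∈ x, a ∈ f b :=
  Part.mem_bind_iff

theorem recursiveIn_of_partrec {g f : ℕ →. ℕ} (h : Nat.Partrec f) : Nat.RecursiveInSingle g f := by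
  induction h with
  | zero => exact .zero
  | succ => exact .succ
  | left => exact .left
  | right => exact .right
  | pair _ _ ihf ihg => exact .pair ihf ihg
  | comp _ _ ihf ihg => exact .comp ihf ihg
  | prec _ _ ihf ihg => exact .prec ihf ihg
  | rfind _ ihf => exact .rfind ihf

theorem RecursiveIn.of_eq {g f f' : ℕ →. ℕ} (h : Nat.RecursiveInSingle g f) (H : ∀ n, f n = f' n) :
    Nat.RecursiveInSingle g f' := (funext H : f = f') ▸ h

theorem exists_ocode {g f : ℕ →. ℕ} (h : Nat.RecursiveInSingle g f) : ∃ c : OCode, c.eval g = f := by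
  induction h with
  | zero => exact ⟨.zero, rfl⟩
  | succ => exact ⟨.succ, rfl⟩
  | left => exact ⟨.left, rfl⟩
  | right => exact ⟨.right, rfl⟩
  | oracle => exact ⟨.oracle, rfl⟩
  | pair _ _ ihf ihg =>
    obtain ⟨cf, rfl⟩ := ihf; obtain ⟨cg, rfl⟩ := ihg; exact ⟨.pair cf cg, rfl⟩
  | comp _ _ ihf ihg =>
    obtain ⟨cf, rfl⟩ := ihf; obtain ⟨cg, rfl⟩ := ihg; exact ⟨.comp cf cg, rfl⟩
  | prec _ _ ihf ihg =>
    obtain ⟨cf, rfl⟩ := ihf; obtain ⟨cg, rfl⟩ := ihg; exact ⟨.prec cf cg, rfl⟩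
  | rfind _ ihf =>
    obtain ⟨cf, rfl⟩ := ihf
    refine ⟨.comp (.rfind' cf) (.pair (.pair .left .right) .zero), ?_⟩
    funext a
    have : (pure 0 : ℕ →. ℕ) a = Part.some 0 := rfl
    simp [OCode.eval, Seq.seq, Nat.unpaired, this, Part.bind_some, Part.map_id']

end Meet16
namespace Meet16

/-- Explicit encoding of `OCode`, a right inverse of `OCode.ofNat`. -/
def enc : OCode → ℕ
  | .zero => 0
  | .succ => 1
  | .left => 2
  | .right => 3
  | .oracle => 4
  | .pair a b => 4 * Nat.pair (enc a) (enc b) + 0 + 5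
  | .comp a b => 4 * Nat.pair (enc a) (enc b) + 1 + 5
  | .prec a b => 4 * Nat.pair (enc a) (enc b) + 2 + 5
  | .rfind' a => 4 * Nat.pair (enc a) 0 + 3 + 5

theorem ofNat_enc : ∀ c : OCode, OCode.ofNat (enc c) = c := by
  intro c
  induction c with
  | zero => simp [enc, OCode.ofNat]
  | succ => simp [enc, OCode.ofNat]
  | left => simp [enc, OCode.ofNat]
  | right => simp [enc, OCode.ofNat]
  | oracle => simp [enc, OCode.ofNat]
  | pair a b iha ihb =>
    have h4 : (4 * Nat.pair (enc a) (enc b) + 0) % 4 = 0 := by omega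
    have h5 : (4 * Nat.pair (enc a) (enc b) + 0) / 4 = Nat.pair (enc a) (enc b) := by omega
    simp [enc, OCode.ofNat, h4, h5, iha, ihb]
  | comp a b iha ihb =>
    have h4 : (4 * Nat.pair (enc a) (enc b) + 1) % 4 = 1 := by omega
    have h5 : (4 * Nat.pair (enc a) (enc b) + 1) / 4 = Nat.pair (enc a) (enc b) := by omega
    simp [enc, OCode.ofNat, h4, h5, iha, ihb]
  | prec a b iha ihb =>
    have h4 : (4 * Nat.pair (enc a) (enc b) + 2) % 4 = 2 := by omega
    have h5 : (4 * Nat.pair (enc a) (enc b) + 2) / 4 = Nat.pair (enc a) (enc b) := by omega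
    simp [enc, OCode.ofNat, h4, h5, iha, ihb]
  | rfind' a iha =>
    have h4 : (4 * Nat.pair (enc a) 0 + 3) % 4 = 3 := by omega
    have h5 : (4 * Nat.pair (enc a) 0 + 3) / 4 = Nat.pair (enc a) 0 := by omega
    simp [enc, OCode.ofNat, h4, h5, iha]

theorem mem_seqpair {x y : Part ℕ} {a : ℕ} :
    a ∈ (Nat.pair <$> x <*> y) ↔ ∃ b ∈ x, ∃ c ∈ y, a = Nat.pair b c := by
  simp [Seq.seq, Part.mem_bind_iff, Part.mem_map_iff]
  aesop

/-- Monotonicity of `OCode.eval` in the oracle. -/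
theorem eval_mono_oracle {o o' : ℕ →. ℕ} (H : ∀ n a, a ∈ o n → a ∈ o' n) :
    ∀ (c : OCode) (x a : ℕ), a ∈ c.eval o x → a ∈ c.eval o' x := by
  intro c
  induction c with
  | zero => exact fun x a h => h
  | succ => exact fun x a h => h
  | left => exact fun x a h => h
  | right => exact fun x a h => h
  | oracle => exact fun x a h => H x a h
  | pair cf cg ihf ihg =>
    intro x a h
    simp only [OCode.eval, mem_seqpair] at h ⊢
    obtain ⟨b1, hb1, b2, hb2, rfl⟩ := h
    exact ⟨b1, ihf _ _ hb1, b2, ihg _ _ hb2, rfl⟩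
  | comp cf cg ihf ihg =>
    intro x a h
    simp only [OCode.eval, Part.bind_eq_bind, Part.mem_bind_iff] at h ⊢
    obtain ⟨b, hb, ha⟩ := Part.mem_bind_iff.1 h
    exact Part.mem_bind_iff.2 ⟨b, ihg _ _ hb, ihf _ _ ha⟩
  | prec cf cg ihf ihg =>
    intro x
    simp only [OCode.eval, Nat.unpaired]
    induction x.unpair.2 with
    | zero => exact fun a h => ihf _ _ h
    | succ n ih =>
      intro a h
      simp only [Part.bind_eq_bind, Part.mem_bind_iff] at h ⊢
      obtain ⟨i, hi, ha⟩ := h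
      exact ⟨i, ih _ hi, ihg _ _ ha⟩
  | rfind' cf ihf =>
    intro x a h
    simp only [OCode.eval, Nat.unpaired, Part.mem_map_iff] at h ⊢
    obtain ⟨n, hn, rfl⟩ := h
    refine ⟨n, ?_, rfl⟩
    replace hn := Nat.mem_rfind.1 hn
    refine Nat.mem_rfind.2 ?_
    constructor
    · obtain ⟨v, hv, e⟩ := (Part.mem_map_iff _).1 hn.1
      exact (Part.mem_map_iff _).2 ⟨v, ihf _ _ hv, e⟩
    · intro m hm
      obtain ⟨v, hv, e⟩ := (Part.mem_map_iff _).1 (hn.2 hm)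
      exact (Part.mem_map_iff _).2 ⟨v, ihf _ _ hv, e⟩

end Meet16
namespace Meet16

/-- The length-`k` prefix of the total oracle `g`, as a partial oracle. -/
def oPfx (g : ℕ → ℕ) (k : ℕ) : ℕ →. ℕ := fun n => if n < k then Part.some (g n) else Part.none

theorem mem_oPfx {g : ℕ → ℕ} {k n a : ℕ} : a ∈ oPfx g k n ↔ n < k ∧ a = g n := by
  unfold oPfx; split <;> simp_all

theorem oPfx_mono {g : ℕ → ℕ} {k k' : ℕ} (h : k ≤ k') :
    ∀ n a, a ∈ oPfx g k n → a ∈ oPfx g k' n := by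
  intro n a ha
  rw [mem_oPfx] at ha ⊢
  exact ⟨lt_of_lt_of_le ha.1 h, ha.2⟩

theorem oPfx_le {g : ℕ → ℕ} {k : ℕ} : ∀ n a, a ∈ oPfx g k n → a ∈ (↑g : ℕ →. ℕ) n := by
  intro n a ha
  rw [mem_oPfx] at ha
  simp [ha.2]

theorem exists_bound {P : ℕ → ℕ → Prop} (mono : ∀ j k k', k ≤ k' → P j k → P j k')
    (N : ℕ) (h : ∀ j ≤ N, ∃ k, P j k) : ∃ k, ∀ j ≤ N, P j k := by
  induction N with
  | zero =>
    obtain ⟨k, hk⟩ := h 0 le_rfl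
    exact ⟨k, fun j hj => by rw [Nat.le_zero.1 hj]; exact hk⟩
  | succ N ih =>
    obtain ⟨k1, hk1⟩ := ih fun j hj => h j (hj.trans (Nat.le_succ N))
    obtain ⟨k2, hk2⟩ := h (N + 1) le_rfl
    refine ⟨max k1 k2, fun j hj => ?_⟩
    rcases Nat.lt_succ_iff_lt_or_eq.1 (Nat.lt_succ_of_le hj) with h' | rfl
    · exact mono _ _ _ (le_max_left _ _) (hk1 j (Nat.lt_succ_iff.1 h'))
    · exact mono _ _ _ (le_max_right _ _) hk2

theorem eval_prec_pair_zero (o : ℕ →. ℕ) (cf cg : OCode) (a : ℕ) :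
    (OCode.prec cf cg).eval o (Nat.pair a 0) = cf.eval o a := by
  simp [OCode.eval, Nat.unpaired]

theorem eval_prec_pair_succ (o : ℕ →. ℕ) (cf cg : OCode) (a n : ℕ) :
    (OCode.prec cf cg).eval o (Nat.pair a (n + 1)) =
      ((OCode.prec cf cg).eval o (Nat.pair a n)).bind
        fun i => cg.eval o (Nat.pair a (Nat.pair n i)) := by
  simp [OCode.eval, Nat.unpaired]

/-- Compactness: any converging computation relative to a total oracle `g` converges
relative to a long enough finite prefix of `g`. -/
theorem eval_compact {g : ℕ → ℕ} :
    ∀ (c : OCode) (x a : ℕ), a ∈ c.eval ↑g x → ∃ k, a ∈ c.eval (oPfx g k) x := by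
  intro c
  induction c with
  | zero => exact fun x a h => ⟨0, h⟩
  | succ => exact fun x a h => ⟨0, h⟩
  | left => exact fun x a h => ⟨0, h⟩
  | right => exact fun x a h => ⟨0, h⟩
  | oracle =>
    intro x a h
    have h' : a = g x := Part.mem_some_iff.1 h
    exact ⟨x + 1, mem_oPfx.2 ⟨Nat.lt_succ_self x, h'⟩⟩
  | pair cf cg ihf ihg =>
    intro x a h
    rw [show (OCode.pair cf cg).eval ↑g x = Nat.pair <$> cf.eval ↑g x <*> cg.eval ↑g x from rfl,
      mem_seqpair] at h
    obtain ⟨b1, hb1, b2, hb2, rfl⟩ := h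
    obtain ⟨k1, hk1⟩ := ihf _ _ hb1
    obtain ⟨k2, hk2⟩ := ihg _ _ hb2
    refine ⟨max k1 k2, ?_⟩
    rw [show (OCode.pair cf cg).eval (oPfx g (max k1 k2)) x =
      Nat.pair <$> cf.eval (oPfx g (max k1 k2)) x <*> cg.eval (oPfx g (max k1 k2)) x from rfl,
      mem_seqpair]
    exact ⟨b1, eval_mono_oracle (oPfx_mono (le_max_left _ _)) _ _ _ hk1,
      b2, eval_mono_oracle (oPfx_mono (le_max_right _ _)) _ _ _ hk2, rfl⟩
  | comp cf cg ihf ihg =>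
    intro x a h
    simp only [OCode.eval, Part.bind_eq_bind, Part.mem_bind_iff] at h ⊢
    obtain ⟨b, hb, ha⟩ := Part.mem_bind_iff.1 h
    obtain ⟨k1, hk1⟩ := ihg _ _ hb
    obtain ⟨k2, hk2⟩ := ihf _ _ ha
    exact ⟨max k1 k2, Part.mem_bind_iff.2 ⟨b, eval_mono_oracle (oPfx_mono (le_max_left _ _)) _ _ _ hk1,
      eval_mono_oracle (oPfx_mono (le_max_right _ _)) _ _ _ hk2⟩⟩
  | prec cf cg ihf ihg =>
    have main : ∀ (n a' a : ℕ), a ∈ (OCode.prec cf cg).eval ↑g (Nat.pair a' n) →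
        ∃ k, a ∈ (OCode.prec cf cg).eval (oPfx g k) (Nat.pair a' n) := by
      intro n
      induction n with
      | zero =>
        intro a' a h
        rw [eval_prec_pair_zero] at h
        obtain ⟨k, hk⟩ := ihf _ _ h
        exact ⟨k, by rw [eval_prec_pair_zero]; exact hk⟩
      | succ n ih =>
        intro a' a h
        rw [eval_prec_pair_succ, Part.mem_bind_iff] at h
        obtain ⟨i, hi, ha⟩ := h
        obtain ⟨k1, hk1⟩ := ih _ _ hi
        obtain ⟨k2, hk2⟩ := ihg _ _ ha
        refine ⟨max k1 k2, ?_⟩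
        rw [eval_prec_pair_succ, Part.mem_bind_iff]
        exact ⟨i, eval_mono_oracle (oPfx_mono (le_max_left _ _)) _ _ _ hk1,
          eval_mono_oracle (oPfx_mono (le_max_right _ _)) _ _ _ hk2⟩
    intro x a h
    have := main x.unpair.2 x.unpair.1 a (by rwa [Nat.pair_unpair])
    rwa [Nat.pair_unpair] at this
  | rfind' cf ihf =>
    intro x a h
    simp only [OCode.eval, Nat.unpaired, Part.mem_map_iff] at h ⊢
    obtain ⟨n₀, hn, rfl⟩ := h
    replace hn := Nat.mem_rfind.1 hn
    have hP : ∀ j ≤ n₀, ∃ k, ∀ b, b ∈ ((fun m => decide (m = 0)) <$>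
        cf.eval ↑g (Nat.pair x.unpair.1 (j + x.unpair.2))) →
        b ∈ ((fun m => decide (m = 0)) <$>
        cf.eval (oPfx g k) (Nat.pair x.unpair.1 (j + x.unpair.2))) := by
      intro j hj
      have hmem : ∃ b, b ∈ ((fun m => decide (m = 0)) <$>
          cf.eval ↑g (Nat.pair x.unpair.1 (j + x.unpair.2))) := by
        rcases Nat.lt_or_ge j n₀ with h' | h'
        · exact ⟨false, hn.2 h'⟩
        · exact ⟨true, (Nat.le_antisymm hj h').symm ▸ hn.1⟩
      obtain ⟨b, hb⟩ := hmem
      obtain ⟨v, hv, hvb⟩ := (Part.mem_map_iff _).1 hb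
      obtain ⟨k, hk⟩ := ihf _ _ hv
      refine ⟨k, fun b' hb' => ?_⟩
      have : b' = b := Part.mem_unique hb' hb
      subst this
      exact (Part.mem_map_iff _).2 ⟨v, hk, hvb⟩
    obtain ⟨k, hk⟩ := exists_bound (fun j k k' hkk' h b hb =>
      (Part.mem_map_iff _).2 (by
        obtain ⟨v, hv, hvb⟩ := (Part.mem_map_iff _).1 (h b hb)
        exact ⟨v, eval_mono_oracle (oPfx_mono hkk') _ _ _ hv, hvb⟩)) n₀ hP
    refine ⟨k, n₀, ?_, rfl⟩
    refine Nat.mem_rfind.2 ?_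
    refine ⟨hk n₀ le_rfl _ hn.1, ?_⟩
    intro m hm
    exact hk m (le_of_lt hm) _ (hn.2 hm)

end Meet16
namespace Meet16

open Nat.Partrec (Code)
open Nat.Partrec.Code

private theorem u1 : Primrec fun z : ℕ => z.unpair.1 := Primrec.fst.comp Primrec.unpair
private theorem u2 : Primrec fun z : ℕ => z.unpair.2 := Primrec.snd.comp Primrec.unpair

/-- `pair (pair L a) b ↦ pair L (pair a b)`. -/
def r1f : ℕ → ℕ := fun z => Nat.pair z.unpair.1.unpair.1 (Nat.pair z.unpair.1.unpair.2 z.unpair.2)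

/-- `pair L (pair a b) ↦ pair (pair L a) b`. -/
def r2f : ℕ → ℕ := fun z => Nat.pair (Nat.pair z.unpair.1 z.unpair.2.unpair.1) z.unpair.2.unpair.2

theorem r1f_prim : Primrec r1f :=
  Primrec₂.natPair.comp (u1.comp u1) (Primrec₂.natPair.comp (u2.comp u1) u2)

theorem r2f_prim : Primrec r2f :=
  Primrec₂.natPair.comp (Primrec₂.natPair.comp u1 (u1.comp u2)) (u2.comp u2)

theorem partrec_of_prim {f : ℕ → ℕ} (h : Primrec f) : Nat.Partrec ↑f :=
  Partrec.nat_iff.1 h.to_comp.partrec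

/-- A code for `r1f`. -/
noncomputable def rc1 : Code := Classical.choose (exists_code.1 (partrec_of_prim r1f_prim))

theorem rc1_spec : ∀ z, Code.eval rc1 z = Part.some (r1f z) := fun z =>
  congrFun (Classical.choose_spec (exists_code.1 (partrec_of_prim r1f_prim))) z

/-- A code for `r2f`. -/
noncomputable def rc2 : Code := Classical.choose (exists_code.1 (partrec_of_prim r2f_prim))

theorem rc2_spec : ∀ z, Code.eval rc2 z = Part.some (r2f z) := fun z =>
  congrFun (Classical.choose_spec (exists_code.1 (partrec_of_prim r2f_prim))) z

/-- The partial oracle encoded by the list coded by `Lc`. -/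
def oList (Lc : ℕ) : ℕ →. ℕ := fun n =>
  Part.ofOption ((Denumerable.ofNat (List ℕ) Lc)[n]?)

/-- The list-lookup function. -/
def flook : ℕ →. ℕ := fun z => oList z.unpair.1 z.unpair.2

theorem flook_partrec : Nat.Partrec flook :=
  Partrec.nat_iff.1 <| Computable.ofOption <|
    (Primrec.list_getElem?.comp ((Primrec.ofNat (List ℕ)).comp u1) u2).to_comp

/-- A code for `flook`. -/
noncomputable def master : Code := Classical.choose (exists_code.1 flook_partrec)

theorem master_spec : ∀ z, Code.eval master z = flook z := fun z =>
  congrFun (Classical.choose_spec (exists_code.1 flook_partrec)) z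

theorem eval_comp' (cf cg : Code) (n : ℕ) :
    Code.eval (cf.comp cg) n = cg.eval n >>= cf.eval := rfl

/-- Compilation of an oracle code into a plain code taking the (coded) finite
oracle-prefix list as an extra first argument, threaded through the computation. -/
noncomputable def compile : OCode → Code
  | .zero => Code.zero
  | .succ => Code.comp Code.succ Code.right
  | .left => Code.comp Code.left Code.right
  | .right => Code.comp Code.right Code.right
  | .oracle => master
  | .pair a b => Code.pair (compile a) (compile b)
  | .comp a b => Code.comp (compile a) (Code.pair Code.left (compile b))
  | .prec a b => Code.comp (Code.prec (compile a) (Code.comp (compile b) rc1)) rc2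
  | .rfind' a => Code.comp (Code.rfind' (Code.comp (compile a) rc1)) rc2

theorem compile_spec : ∀ (c : OCode) (Lc x : ℕ),
    Code.eval (compile c) (Nat.pair Lc x) = OCode.eval (oList Lc) c x := by
  intro c
  induction c with
  | zero => intro Lc x; rfl
  | succ =>
    intro Lc x
    simp [compile, Code.eval, OCode.eval, Seq.seq]
    exact Part.bind_some _ _
  | left =>
    intro Lc x
    simp [compile, Code.eval, OCode.eval, Seq.seq]
    exact Part.bind_some _ _
  | right =>
    intro Lc x
    simp [compile, Code.eval, OCode.eval, Seq.seq]
    exact Part.bind_some _ _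
  | oracle =>
    intro Lc x
    rw [show compile .oracle = master from rfl, master_spec]
    simp [flook, OCode.eval]
  | pair a b iha ihb =>
    intro Lc x
    simp only [compile, Code.eval, OCode.eval, iha, ihb]
  | comp a b iha ihb =>
    intro Lc x
    apply Part.ext; intro v
    simp only [compile, Code.eval, OCode.eval, Part.bind_eq_bind, Part.mem_bind_iff,
      mem_seqpair, mem_bindP]
    constructor
    · rintro ⟨w, ⟨b1, hb1, b2, hb2, rfl⟩, hv⟩
      have : b1 = Lc := by simpa using hb1
      subst this
      rw [ihb] at hb2
      rw [iha] at hv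
      exact ⟨b2, hb2, hv⟩
    · rintro ⟨w, hw, hv⟩
      rw [← ihb] at hw
      refine ⟨Nat.pair Lc w, ⟨Lc, by simp, w, hw, rfl⟩, ?_⟩
      rw [iha]
      exact hv
  | prec a b iha ihb =>
    intro Lc x
    have key : ∀ (x1 x2 : ℕ),
        Code.eval (Code.prec (compile a) (Code.comp (compile b) rc1))
          (Nat.pair (Nat.pair Lc x1) x2) =
        OCode.eval (oList Lc) (.prec a b) (Nat.pair x1 x2) := by
      intro x1 x2
      induction x2 with
      | zero =>
        rw [eval_prec_zero, eval_prec_pair_zero, iha]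
      | succ n ih =>
        rw [eval_prec_succ, eval_prec_pair_succ, ih]
        simp only [Part.bind_eq_bind]
        refine congrArg _ (funext fun i => ?_)
        rw [eval_comp', rc1_spec, bindP_some,
          show r1f (Nat.pair (Nat.pair Lc x1) (Nat.pair n i)) =
            Nat.pair Lc (Nat.pair x1 (Nat.pair n i)) by simp [r1f], ihb]
    rw [show compile (OCode.prec a b) =
        Code.comp (Code.prec (compile a) (Code.comp (compile b) rc1)) rc2 from rfl,
      eval_comp', rc2_spec, bindP_some,
      show r2f (Nat.pair Lc x) = Nat.pair (Nat.pair Lc x.unpair.1) x.unpair.2 by simp [r2f],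
      key, Nat.pair_unpair]
  | rfind' a iha =>
    intro Lc x
    rw [show compile (OCode.rfind' a) =
        Code.comp (Code.rfind' (Code.comp (compile a) rc1)) rc2 from rfl,
      eval_comp', rc2_spec, bindP_some,
      show r2f (Nat.pair Lc x) = Nat.pair (Nat.pair Lc x.unpair.1) x.unpair.2 by simp [r2f]]
    simp only [Code.eval, OCode.eval, Nat.unpaired, Nat.unpair_pair]
    refine congrArg _ (congrArg _ (funext fun n => congrArg _ ?_))
    rw [rc1_spec, bindP_some,
      show r1f (Nat.pair (Nat.pair Lc x.unpair.1) (n + x.unpair.2)) =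
        Nat.pair Lc (Nat.pair x.unpair.1 (n + x.unpair.2)) by simp [r1f], iha]

end Meet16
namespace Meet16

open Nat.Partrec (Code)
open Nat.Partrec.Code

/-- The compiled code of the `e`-th oracle code. -/
noncomputable def CN : ℕ → Code := fun e => compile (OCode.ofNat e)

/-- One step of the strong recursion computing `CN`. -/
noncomputable def gstep (l : List Code) : Option Code :=
  if l.length = 0 then some Code.zero
  else if l.length = 1 then some (Code.comp Code.succ Code.right)
  else if l.length = 2 then some (Code.comp Code.left Code.right)
  else if l.length = 3 then some (Code.comp Code.right Code.right)
  else if l.length = 4 then some master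
  else
    l[((l.length - 5) / 4).unpair.1]?.bind fun c1 =>
    l[((l.length - 5) / 4).unpair.2]?.bind fun c2 =>
    some (if (l.length - 5) % 4 = 0 then Code.pair c1 c2
      else if (l.length - 5) % 4 = 1 then Code.comp c1 (Code.pair Code.left c2)
      else if (l.length - 5) % 4 = 2 then Code.comp (Code.prec c1 (Code.comp c2 rc1)) rc2
      else Code.comp (Code.rfind' (Code.comp c1 rc1)) rc2)

theorem gstep_prim : Primrec gstep := by
  have hlen : Primrec (List.length : List Code → ℕ) := Primrec.list_length
  have hm : Primrec (fun l : List Code => l.length - 5) :=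
    Primrec.nat_sub.comp hlen (Primrec.const 5)
  have hq : Primrec (fun l : List Code => (l.length - 5) / 4) :=
    Primrec.nat_div.comp hm (Primrec.const 4)
  have hi1 : Primrec (fun l : List Code => ((l.length - 5) / 4).unpair.1) :=
    Primrec.fst.comp (Primrec.unpair.comp hq)
  have hi2 : Primrec (fun l : List Code => ((l.length - 5) / 4).unpair.2) :=
    Primrec.snd.comp (Primrec.unpair.comp hq)
  have hc1 : Primrec (fun l : List Code => l[((l.length - 5) / 4).unpair.1]?) :=
    Primrec.list_getElem?.comp Primrec.id hi1
  have hc2 : Primrec (fun l : List Code => l[((l.length - 5) / 4).unpair.2]?) :=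
    Primrec.list_getElem?.comp Primrec.id hi2
  have hr : Primrec (fun l : List Code => (l.length - 5) % 4) :=
    Primrec.nat_mod.comp hm (Primrec.const 4)
  have hrp : Primrec (fun p : (List Code × Code) × Code => (p.1.1.length - 5) % 4) :=
    hr.comp (Primrec.fst.comp Primrec.fst)
  have hC1 : Primrec (fun p : (List Code × Code) × Code => p.1.2) :=
    Primrec.snd.comp Primrec.fst
  have hC2 : Primrec (fun p : (List Code × Code) × Code => p.2) := Primrec.snd
  have hbody : Primrec (fun p : (List Code × Code) × Code =>
      if (p.1.1.length - 5) % 4 = 0 then Code.pair p.1.2 p.2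
      else if (p.1.1.length - 5) % 4 = 1 then Code.comp p.1.2 (Code.pair Code.left p.2)
      else if (p.1.1.length - 5) % 4 = 2 then
        Code.comp (Code.prec p.1.2 (Code.comp p.2 rc1)) rc2
      else Code.comp (Code.rfind' (Code.comp p.1.2 rc1)) rc2) := by
    refine Primrec.ite (Primrec.eq.comp hrp (Primrec.const 0))
      (primrec₂_pair.comp hC1 hC2) ?_
    refine Primrec.ite (Primrec.eq.comp hrp (Primrec.const 1))
      (primrec₂_comp.comp hC1 (primrec₂_pair.comp (Primrec.const Code.left) hC2)) ?_
    refine Primrec.ite (Primrec.eq.comp hrp (Primrec.const 2))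
      (primrec₂_comp.comp (primrec₂_prec.comp hC1 (primrec₂_comp.comp hC2 (Primrec.const rc1)))
        (Primrec.const rc2)) ?_
    exact primrec₂_comp.comp (primrec_rfind'.comp (primrec₂_comp.comp hC1 (Primrec.const rc1)))
      (Primrec.const rc2)
  have hmid : Primrec (fun p : List Code × Code =>
      p.1[((p.1.length - 5) / 4).unpair.2]?.bind fun c2 =>
      some (if (p.1.length - 5) % 4 = 0 then Code.pair p.2 c2
        else if (p.1.length - 5) % 4 = 1 then Code.comp p.2 (Code.pair Code.left c2)
        else if (p.1.length - 5) % 4 = 2 then Code.comp (Code.prec p.2 (Code.comp c2 rc1)) rc2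
        else Code.comp (Code.rfind' (Code.comp p.2 rc1)) rc2)) :=
    Primrec.option_bind (hc2.comp Primrec.fst) (Primrec.option_some.comp hbody).to₂
  have houter : Primrec (fun l : List Code =>
      l[((l.length - 5) / 4).unpair.1]?.bind fun c1 =>
      l[((l.length - 5) / 4).unpair.2]?.bind fun c2 =>
      some (if (l.length - 5) % 4 = 0 then Code.pair c1 c2
        else if (l.length - 5) % 4 = 1 then Code.comp c1 (Code.pair Code.left c2)
        else if (l.length - 5) % 4 = 2 then Code.comp (Code.prec c1 (Code.comp c2 rc1)) rc2
        else Code.comp (Code.rfind' (Code.comp c1 rc1)) rc2)) :=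
    Primrec.option_bind hc1 hmid.to₂
  unfold gstep
  refine Primrec.ite (Primrec.eq.comp hlen (Primrec.const 0)) (Primrec.const _) ?_
  refine Primrec.ite (Primrec.eq.comp hlen (Primrec.const 1)) (Primrec.const _) ?_
  refine Primrec.ite (Primrec.eq.comp hlen (Primrec.const 2)) (Primrec.const _) ?_
  refine Primrec.ite (Primrec.eq.comp hlen (Primrec.const 3)) (Primrec.const _) ?_
  exact Primrec.ite (Primrec.eq.comp hlen (Primrec.const 4)) (Primrec.const _) houter

theorem gstep_spec : ∀ e, gstep ((List.range e).map CN) = some (CN e) := by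
  intro e
  match e with
  | 0 => simp [gstep, CN, compile, OCode.ofNat]
  | 1 => simp [gstep, CN, compile, OCode.ofNat]
  | 2 => simp [gstep, CN, compile, OCode.ofNat]
  | 3 => simp [gstep, CN, compile, OCode.ofNat]
  | 4 => simp [gstep, CN, compile, OCode.ofNat]
  | (n + 5) =>
    have hlen : ((List.range (n + 5)).map CN).length = n + 5 := by simp
    have h1 : (n / 4).unpair.1 < n + 5 :=
      lt_of_le_of_lt (le_trans (Nat.unpair_left_le _) (Nat.div_le_self _ _)) (by omega)
    have h2 : (n / 4).unpair.2 < n + 5 :=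
      lt_of_le_of_lt (le_trans (Nat.unpair_right_le _) (Nat.div_le_self _ _)) (by omega)
    have hget : ∀ j, j < n + 5 → ((List.range (n + 5)).map CN)[j]? = some (CN j) := by
      intro j hj
      rw [List.getElem?_map, List.getElem?_range hj]
      rfl
    have hm5 : (n + 5) - 5 = n := by omega
    rw [gstep]
    rw [hlen]
    simp only [hm5]
    rw [if_neg (by omega), if_neg (by omega), if_neg (by omega), if_neg (by omega),
      if_neg (by omega), hget _ h1, hget _ h2]
    simp only [Option.bind_some]
    by_cases e0 : n % 4 = 0
    · simp [e0, CN, OCode.ofNat, compile]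
    · by_cases e1 : n % 4 = 1
      · simp [e0, e1, CN, OCode.ofNat, compile]
      · by_cases e2 : n % 4 = 2
        · simp [e0, e1, e2, CN, OCode.ofNat, compile]
        · simp [e0, e1, e2, CN, OCode.ofNat, compile]

/-- `CN` is primitive recursive. -/
theorem CN_prim : Primrec CN := by
  have h2 : Primrec₂ (fun (_ : ℕ) (e : ℕ) => CN e) :=
    Primrec.nat_strong_rec _ (gstep_prim.comp Primrec.snd).to₂ fun _ e => gstep_spec e
  exact h2.comp (Primrec.const 0) Primrec.id

end Meet16
namespace Meet16

open Nat.Partrec (Code)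
open Nat.Partrec.Code
open Encodable Denumerable

/-- The length-`k` prefix list of `g`. -/
def pfxL (g : ℕ → ℕ) (k : ℕ) : List ℕ := List.ofFn fun i : Fin k => g i

theorem pfxL_get? (g : ℕ → ℕ) (k n : ℕ) :
    (pfxL g k)[n]? = if n < k then some (g n) else none := by
  unfold pfxL
  split
  · simp [‹n < k›]
  · exact List.getElem?_eq_none (by simpa using Nat.le_of_not_lt ‹¬ n < k›)

theorem oList_pfx (g : ℕ → ℕ) (k : ℕ) : oList (encode (pfxL g k)) = oPfx g k := by
  funext n
  rw [oList, Denumerable.ofNat_encode, pfxL_get?, oPfx]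
  split <;> simp

/-- The code of the reversed length-`k` prefix list of `g`. -/
def revP (g : ℕ → ℕ) : ℕ → ℕ := fun k =>
  Nat.rec 0 (fun y ih => Nat.succ (Nat.pair (g y) ih)) k

theorem revP_eq (g : ℕ → ℕ) : ∀ k, revP g k = encode ((pfxL g k).reverse) := by
  intro k
  induction k with
  | zero => simp [revP, pfxL, encode_list_nil]
  | succ k ih =>
    have : (pfxL g (k + 1)).reverse = g k :: (pfxL g k).reverse := by
      unfold pfxL
      rw [List.ofFn_succ']
      simp [List.concat_eq_append, List.reverse_append]
    rw [this, encode_list_cons]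
    show Nat.succ (Nat.pair (g k) (revP g k)) = _
    rw [ih]
    rfl

theorem rev_revP (g : ℕ → ℕ) (k : ℕ) :
    encode ((Denumerable.ofNat (List ℕ) (revP g k)).reverse) = encode (pfxL g k) := by
  rw [revP_eq, Denumerable.ofNat_encode, List.reverse_reverse]

/-- `revP g` is computable relative to `g`. -/
theorem exists_revP (g : ℕ → ℕ) :
    ∃ R : ℕ →. ℕ, Nat.RecursiveInSingle ↑g R ∧ ∀ k, R k = Part.some (revP g k) := by
  have hproj1 : Nat.Partrec ↑(fun m : ℕ => m.unpair.2.unpair.1) := partrec_of_prim (u1.comp u2)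
  have hproj2 : Nat.Partrec ↑(fun m : ℕ => m.unpair.2.unpair.2) := partrec_of_prim (u2.comp u2)
  have hpairk : Nat.Partrec ↑(fun k : ℕ => Nat.pair 0 k) :=
    partrec_of_prim (Primrec₂.natPair.comp (Primrec.const 0) Primrec.id)
  refine ⟨_, Nat.RecursiveInSingle.comp
    (Nat.RecursiveInSingle.prec .zero (Nat.RecursiveInSingle.comp .succ (Nat.RecursiveInSingle.pair
      (Nat.RecursiveInSingle.comp .oracle (recursiveIn_of_partrec hproj1))
      (recursiveIn_of_partrec hproj2))))
    (recursiveIn_of_partrec hpairk), ?_⟩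
  intro k
  rw [PFun.coe_val]
  simp only [Part.bind_eq_bind, Part.bind_some]
  simp only [Nat.unpaired, Nat.unpair_pair]
  induction k with
  | zero => rfl
  | succ k ih =>
    show (Nat.rec _ _ k : Part ℕ).bind _ = _
    rw [ih, Part.bind_some]
    simp only [PFun.coe_val, Part.bind_eq_bind, Part.bind_some, Nat.unpair_pair, Seq.seq,
      Part.map_eq_map, Part.map_some, bindP_some]
    rfl

end Meet16
namespace Meet16

open Nat.Partrec (Code)
open Nat.Partrec.Code
open Encodable Denumerable

/-- Bounded evaluation: input `z = pair (pair (pair e inp) (pair s k)) r` where `r` codes the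
reversed oracle-prefix list; runs `evaln` for `s` steps. -/
noncomputable def tOpt : ℕ → Option ℕ := fun z =>
  Code.evaln z.unpair.1.unpair.2.unpair.1 (CN z.unpair.1.unpair.1.unpair.1)
    (Nat.pair (encode ((Denumerable.ofNat (List ℕ) z.unpair.2).reverse))
      z.unpair.1.unpair.1.unpair.2)

set_option maxHeartbeats 1000000 in
theorem tOpt_prim : Primrec tOpt := by
  have hs : Primrec (fun z : ℕ => z.unpair.1.unpair.2.unpair.1) := u1.comp (u2.comp u1)
  have he : Primrec (fun z : ℕ => z.unpair.1.unpair.1.unpair.1) := u1.comp (u1.comp u1)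
  have hinp : Primrec (fun z : ℕ => z.unpair.1.unpair.1.unpair.2) := u2.comp (u1.comp u1)
  have henc : Primrec (fun z : ℕ =>
      encode ((Denumerable.ofNat (List ℕ) z.unpair.2).reverse)) :=
    Primrec.encode.comp (Primrec.list_reverse.comp ((Primrec.ofNat (List ℕ)).comp u2))
  exact primrec_evaln.comp
    (Primrec.pair (Primrec.pair hs (CN_prim.comp he)) (Primrec₂.natPair.comp henc hinp))

/-- The halting test. -/
noncomputable def tstN : ℕ → ℕ := fun z => if (tOpt z).isSome then 0 else 1

theorem tstN_partrec : Nat.Partrec ↑tstN :=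
  partrec_of_prim <| (Primrec.cond (Primrec.option_isSome.comp tOpt_prim)
    (Primrec.const 0) (Primrec.const 1)).of_eq fun z => by
      cases h : (tOpt z).isSome <;> simp [tstN, h]

/-- The output extraction. -/
noncomputable def outP : ℕ →. ℕ := fun z => Part.ofOption (tOpt z)

theorem outP_partrec : Nat.Partrec outP :=
  Partrec.nat_iff.1 (Computable.ofOption tOpt_prim.to_comp)

/-- A universal function for the oracle codes, recursive in the (total) oracle `g`. -/
theorem exists_univ (g : ℕ → ℕ) :
    ∃ U : ℕ →. ℕ, Nat.RecursiveInSingle ↑g U ∧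
      ∀ e inp a, a ∈ OCode.eval ↑g (OCode.ofNat e) inp → a ∈ U (Nat.pair e inp) := by
  obtain ⟨R, hR, hRval⟩ := exists_revP g
  have hid : Nat.RecursiveInSingle ↑g ↑(fun n : ℕ => n) :=
    recursiveIn_of_partrec (partrec_of_prim Primrec.id)
  -- the function attaching the coded reversed prefix list
  set A : ℕ →. ℕ := fun w =>
    Nat.pair <$> (↑(fun n : ℕ => n) : ℕ →. ℕ) w <*>
      ((fun w => (↑(fun m : ℕ => m.unpair.2.unpair.2) : ℕ →. ℕ) w >>= R) w) with hAdef
  have hArec : Nat.RecursiveInSingle ↑g A :=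
    Nat.RecursiveInSingle.pair hid
      (Nat.RecursiveInSingle.comp hR (recursiveIn_of_partrec (partrec_of_prim (u2.comp u2))))
  have hAval : ∀ w, A w = Part.some (Nat.pair w (revP g w.unpair.2.unpair.2)) := by
    intro w
    rw [hAdef]
    simp [PFun.coe_val, hRval, Seq.seq, bindP_some]
  -- the test function
  set F : ℕ →. ℕ := fun w => A w >>= (↑tstN : ℕ →. ℕ) with hFdef
  have hFrec : Nat.RecursiveInSingle ↑g F :=
    Nat.RecursiveInSingle.comp (recursiveIn_of_partrec tstN_partrec) hArec
  have hFval : ∀ w, F w = Part.some (tstN (Nat.pair w (revP g w.unpair.2.unpair.2))) := by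
    intro w
    rw [hFdef]
    show A w >>= _ = _
    rw [hAval, bindP_some, PFun.coe_val]
  -- the output function
  set O : ℕ →. ℕ := fun w => A w >>= outP with hOdef
  have hOrec : Nat.RecursiveInSingle ↑g O :=
    Nat.RecursiveInSingle.comp (recursiveIn_of_partrec outP_partrec) hArec
  have hOval : ∀ w, O w = Part.ofOption (tOpt (Nat.pair w (revP g w.unpair.2.unpair.2))) := by
    intro w
    rw [hOdef]
    show A w >>= _ = _
    rw [hAval, bindP_some]
    rfl
  -- the search
  set Urf : ℕ →. ℕ := fun x =>
    Nat.rfind fun t => (fun m => m = 0) <$> F (Nat.pair x t) with hUrfdef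
  have hUrfrec : Nat.RecursiveInSingle ↑g Urf := Nat.RecursiveInSingle.rfind hFrec
  set UP : ℕ →. ℕ := fun x =>
    Nat.pair <$> (↑(fun n : ℕ => n) : ℕ →. ℕ) x <*> Urf x with hUPdef
  have hUPrec : Nat.RecursiveInSingle ↑g UP := Nat.RecursiveInSingle.pair hid hUrfrec
  refine ⟨fun x => UP x >>= O, Nat.RecursiveInSingle.comp hOrec hUPrec, ?_⟩
  intro e inp a ha
  set x := Nat.pair e inp with hx
  -- existence of a successful search parameter
  obtain ⟨k0, hk0⟩ := eval_compact _ _ _ ha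
  rw [← oList_pfx, ← compile_spec] at hk0
  obtain ⟨s0, hs0⟩ := evaln_complete.1 hk0
  have htOpt0 : (tOpt (Nat.pair (Nat.pair x (Nat.pair s0 k0)) (revP g k0))).isSome := by
    unfold tOpt
    rw [hx]
    simp only [Nat.unpair_pair, rev_revP]
    rw [show CN e = compile (OCode.ofNat e) from rfl]
    exact Option.isSome_iff_exists.2 ⟨a, hs0⟩
  have htrue : (true : Bool) ∈
      ((fun m => decide (m = 0)) <$> F (Nat.pair x (Nat.pair s0 k0))) := by
    rw [hFval]
    simp only [Nat.unpair_pair, Part.map_eq_map, Part.map_some, Part.mem_some_iff]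
    rw [tstN]
    rw [if_pos htOpt0]
    simp
  -- the search terminates
  have hdom : (Nat.rfind fun t => (fun m => decide (m = 0)) <$> F (Nat.pair x t)).Dom := by
    apply Nat.rfind_dom.2
    refine ⟨_, htrue, ?_⟩
    intro m _
    rw [hFval]
    simp
  obtain ⟨t', ht'⟩ := Part.dom_iff_mem.1 hdom
  have htrue' := Nat.rfind_spec ht'
  rw [hFval] at htrue'
  have htst0 : tstN (Nat.pair (Nat.pair x t')
      (revP g (Nat.pair x t').unpair.2.unpair.2)) = 0 := by
    have := htrue'
    simp only [Part.map_eq_map, Part.map_some, Part.mem_some_iff] at this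
    exact of_decide_eq_true this.symm
  have hsome : (tOpt (Nat.pair (Nat.pair x t')
      (revP g (Nat.pair x t').unpair.2.unpair.2))).isSome := by
    by_contra hns
    rw [tstN, if_neg hns] at htst0
    omega
  obtain ⟨b, hb⟩ := Option.isSome_iff_exists.1 hsome
  -- b is in the oracle evaluation, hence equals a
  have hba : b = a := by
    have hb' := hb
    unfold tOpt at hb'
    rw [hx] at hb'
    simp only [Nat.unpair_pair, rev_revP] at hb'
    have hbev : b ∈ Code.eval (CN e) (Nat.pair (encode (pfxL g t'.unpair.2)) inp) :=
      evaln_sound hb'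
    rw [show CN e = compile (OCode.ofNat e) from rfl, compile_spec, oList_pfx] at hbev
    have : b ∈ OCode.eval ↑g (OCode.ofNat e) inp :=
      eval_mono_oracle (fun n a h => oPfx_le n a h) _ _ _ hbev
    exact Part.mem_unique this ha
  -- assemble
  show a ∈ UP x >>= O
  rw [Part.bind_eq_bind, Part.mem_bind_iff]
  refine ⟨Nat.pair x t', ?_, ?_⟩
  · show Nat.pair x t' ∈ Nat.pair <$> (↑(fun n : ℕ => n) : ℕ →. ℕ) x <*> Urf x
    rw [mem_seqpair]
    exact ⟨x, by simp [PFun.coe_val], t', ht', rfl⟩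
  · change a ∈ O (Nat.pair x t')
    rw [hOval]
    simp only [Nat.unpair_pair]
    rw [show (Nat.pair x t').unpair.2.unpair.2 = t'.unpair.2 by simp] at hb
    rw [hb, hba]
    simp [Part.ofOption]

end Meet16
namespace Meet16

open Nat.Partrec (Code)
open Nat.Partrec.Code

/-- Embedding of plain codes into oracle codes. -/
def emb : Code → OCode
  | Code.zero => .zero
  | Code.succ => .succ
  | Code.left => .left
  | Code.right => .right
  | Code.pair a b => .pair (emb a) (emb b)
  | Code.comp a b => .comp (emb a) (emb b)
  | Code.prec a b => .prec (emb a) (emb b)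
  | Code.rfind' a => .rfind' (emb a)

theorem emb_eval (o : ℕ →. ℕ) : ∀ c : Code, OCode.eval o (emb c) = Code.eval c := by
  intro c
  induction c with
  | zero => rfl
  | succ => rfl
  | left => rfl
  | right => rfl
  | pair a b iha ihb => simp [emb, OCode.eval, Code.eval, iha, ihb]; rfl
  | comp a b iha ihb => simp [emb, OCode.eval, Code.eval, iha, ihb]; rfl
  | prec a b iha ihb => simp [emb, OCode.eval, Code.eval, iha, ihb]; rfl
  | rfind' a iha => simp [emb, OCode.eval, Code.eval, iha]; rfl

/-- Constant oracle codes. -/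
def constO (n : ℕ) : OCode := emb (Code.const n)

theorem constO_eval (o : ℕ →. ℕ) (m x : ℕ) : OCode.eval o (constO m) x = Part.some m := by
  rw [constO, emb_eval, eval_const]

/-- The comparison function. -/
def cmpf : ℕ → ℕ := fun z => if z.unpair.1 = z.unpair.2 then 0 else 1

theorem cmpf_prim : Primrec cmpf :=
  Primrec.ite (Primrec.eq.comp u1 u2) (Primrec.const 0) (Primrec.const 1)

/-- An oracle code for `cmpf` (oracle-independent). -/
noncomputable def CMP : OCode :=
  emb (Classical.choose (exists_code.1 (partrec_of_prim cmpf_prim)))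

theorem CMP_eval (o : ℕ →. ℕ) (x : ℕ) : OCode.eval o CMP x = Part.some (cmpf x) := by
  rw [CMP, emb_eval,
    congrFun (Classical.choose_spec (exists_code.1 (partrec_of_prim cmpf_prim))) x]
  rfl

/-- The comparing oracle code: on any input, computes `c` at `n` and compares with `v`. -/
noncomputable def cmpCode (c : OCode) (n v : ℕ) : OCode :=
  OCode.comp CMP (OCode.pair (constO v) (OCode.comp c (constO n)))

theorem cmpCode_eval (o : ℕ →. ℕ) (c : OCode) (n v w : ℕ) (hw : w ∈ OCode.eval o c n) :
    (if v = w then 0 else 1 : ℕ) ∈ OCode.eval o (cmpCode c n v) 0 := by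
  show _ ∈ OCode.eval o (OCode.pair (constO v) (OCode.comp c (constO n))) 0 >>=
    OCode.eval o CMP
  rw [mem_bindP]
  refine ⟨Nat.pair v w, ?_, ?_⟩
  · show _ ∈ Nat.pair <$> OCode.eval o (constO v) 0 <*>
      (OCode.eval o (constO n) 0 >>= OCode.eval o c)
    rw [mem_seqpair]
    refine ⟨v, ?_, w, ?_, rfl⟩
    · rw [constO_eval]; exact Part.mem_some v
    · rw [constO_eval, bindP_some]; exact hw
  · rw [CMP_eval]
    simp [cmpf, Nat.unpair_pair]

/-- Encoding of `constO`. -/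
theorem encC_eq : ∀ m, enc (constO m) = Nat.rec (motive := fun _ => ℕ) 0
    (fun _ ih => 4 * Nat.pair 1 ih + 1 + 5) m := by
  intro m
  induction m with
  | zero => rfl
  | succ m ih =>
    show enc (.comp .succ (constO m)) = _
    rw [enc, ih]
    rfl

theorem encC_prim : Primrec fun m => enc (constO m) := by
  have : Primrec₂ (fun (_ : ℕ) (ih : ℕ) => 4 * Nat.pair 1 ih + 1 + 5) :=
    (Primrec.nat_add.comp
      (Primrec.nat_add.comp
        (Primrec.nat_mul.comp (Primrec.const 4) (Primrec₂.natPair.comp (Primrec.const 1)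
          Primrec.snd)) (Primrec.const 1)) (Primrec.const 5)).to₂
  exact (Primrec.nat_rec₁ 0 this).of_eq fun m => (encC_eq m).symm

/-- Encoding of `cmpCode`. -/
theorem enc_cmpCode (c : OCode) (n v : ℕ) :
    enc (cmpCode c n v) =
      4 * Nat.pair (enc CMP)
        (4 * Nat.pair (enc (constO v)) (4 * Nat.pair (enc c) (enc (constO n)) + 1 + 5)
          + 0 + 5) + 1 + 5 := rfl

theorem enc_cmpCode_prim (c : OCode) :
    Primrec fun w : ℕ => enc (cmpCode c w.unpair.1 w.unpair.2) := by
  have hn : Primrec fun w : ℕ => enc (constO w.unpair.1) := encC_prim.comp u1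
  have hv : Primrec fun w : ℕ => enc (constO w.unpair.2) := encC_prim.comp u2
  have inner : Primrec fun w : ℕ => 4 * Nat.pair (enc c) (enc (constO w.unpair.1)) + 1 + 5 :=
    Primrec.nat_add.comp (Primrec.nat_add.comp
      (Primrec.nat_mul.comp (Primrec.const 4)
        (Primrec₂.natPair.comp (Primrec.const (enc c)) hn)) (Primrec.const 1)) (Primrec.const 5)
  have mid : Primrec fun w : ℕ =>
      4 * Nat.pair (enc (constO w.unpair.2))
        (4 * Nat.pair (enc c) (enc (constO w.unpair.1)) + 1 + 5) + 0 + 5 :=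
    Primrec.nat_add.comp (Primrec.nat_add.comp
      (Primrec.nat_mul.comp (Primrec.const 4) (Primrec₂.natPair.comp hv inner))
      (Primrec.const 0)) (Primrec.const 5)
  have outer : Primrec fun w : ℕ =>
      4 * Nat.pair (enc CMP)
        (4 * Nat.pair (enc (constO w.unpair.2))
          (4 * Nat.pair (enc c) (enc (constO w.unpair.1)) + 1 + 5) + 0 + 5) + 1 + 5 :=
    Primrec.nat_add.comp (Primrec.nat_add.comp
      (Primrec.nat_mul.comp (Primrec.const 4)
        (Primrec₂.natPair.comp (Primrec.const (enc CMP)) mid)) (Primrec.const 1)) (Primrec.const 5)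
  exact outer.of_eq fun w => by rw [enc_cmpCode]

end Meet16
namespace Meet16

open Classical in
theorem mem_dOracle {P Q : Set ℕ} {n v : ℕ} :
    v ∈ dOracle P Q n ↔ n ∈ P ∪ Q ∧ v = (if n ∈ Q then 1 else 0) := by
  unfold dOracle
  rw [Part.mem_mk_iff]
  constructor
  · rintro ⟨h, rfl⟩; exact ⟨h, rfl⟩
  · rintro ⟨h, rfl⟩; exact ⟨h, rfl⟩

/-- One half of the upper-bound part: the decoding oracle is T1-reducible to `chi A`
(via the first components). -/
theorem dOracle_red_left (A B : Set ℕ) :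
    T1Reducible (dOracle (Hset A 0 ⊗ Hset B 0) (Hset A 1 ⊗ Hset B 1)) ↑(chi A) := by
  obtain ⟨U, hUrec, hUval⟩ := exists_univ (chi A)
  refine ⟨fun n => (↑(fun n : ℕ => Nat.pair n.unpair.1 0) : ℕ →. ℕ) n >>= U,
    Nat.RecursiveInSingle.comp hUrec (recursiveIn_of_partrec (partrec_of_prim
      (Primrec₂.natPair.comp u1 (Primrec.const 0)))), ?_⟩
  intro n v hv
  rw [mem_dOracle] at hv
  obtain ⟨hpq, rfl⟩ := hv
  simp only [PFun.coe_val, Part.bind_eq_bind, Part.bind_some, bindP_some]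
  by_cases hQ : n ∈ Hset A 1 ⊗ Hset B 1
  · rw [if_pos hQ]
    obtain ⟨p, hp, q, hq, rfl⟩ := hQ
    rw [Nat.unpair_pair]
    exact hUval p 0 1 hp
  · rw [if_neg hQ]
    rcases hpq with hP | hQ'
    · obtain ⟨p, hp, q, hq, rfl⟩ := hP
      rw [Nat.unpair_pair]
      exact hUval p 0 0 hp
    · exact absurd hQ' hQ

/-- The other half: reduction to `chi B` via the second components. -/
theorem dOracle_red_right (A B : Set ℕ) :
    T1Reducible (dOracle (Hset A 0 ⊗ Hset B 0) (Hset A 1 ⊗ Hset B 1)) ↑(chi B) := by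
  obtain ⟨U, hUrec, hUval⟩ := exists_univ (chi B)
  refine ⟨fun n => (↑(fun n : ℕ => Nat.pair n.unpair.2 0) : ℕ →. ℕ) n >>= U,
    Nat.RecursiveInSingle.comp hUrec (recursiveIn_of_partrec (partrec_of_prim
      (Primrec₂.natPair.comp u2 (Primrec.const 0)))), ?_⟩
  intro n v hv
  rw [mem_dOracle] at hv
  obtain ⟨hpq, rfl⟩ := hv
  simp only [PFun.coe_val, Part.bind_eq_bind, Part.bind_some, bindP_some]
  by_cases hQ : n ∈ Hset A 1 ⊗ Hset B 1
  · rw [if_pos hQ]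
    obtain ⟨p, hp, q, hq, rfl⟩ := hQ
    rw [Nat.unpair_pair]
    exact hUval q 0 1 hq
  · rw [if_neg hQ]
    rcases hpq with hP | hQ'
    · obtain ⟨p, hp, q, hq, rfl⟩ := hP
      rw [Nat.unpair_pair]
      exact hUval q 0 0 hq
    · exact absurd hQ' hQ

/-- The meet property. -/
theorem dOracle_meet (A B : Set ℕ) (k : ℕ →. ℕ)
    (hkA : T1Reducible k ↑(chi A)) (hkB : T1Reducible k ↑(chi B)) :
    T1Reducible k (dOracle (Hset A 0 ⊗ Hset B 0) (Hset A 1 ⊗ Hset B 1)) := by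
  obtain ⟨hA, hArec, hAe⟩ := hkA
  obtain ⟨hB, hBrec, hBe⟩ := hkB
  obtain ⟨ca, hca⟩ := exists_ocode hArec
  obtain ⟨cb, hcb⟩ := exists_ocode hBrec
  set d := dOracle (Hset A 0 ⊗ Hset B 0) (Hset A 1 ⊗ Hset B 1) with hd
  set NCf : ℕ → ℕ := fun w =>
    Nat.pair (enc (cmpCode ca w.unpair.1 w.unpair.2))
      (enc (cmpCode cb w.unpair.1 w.unpair.2)) with hNCf
  have hNCprim : Primrec NCf :=
    Primrec₂.natPair.comp (enc_cmpCode_prim ca) (enc_cmpCode_prim cb)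
  refine ⟨fun n => Nat.rfind fun v => (fun m => m = 0) <$>
      ((fun w => (↑NCf : ℕ →. ℕ) w >>= d) (Nat.pair n v)),
    Nat.RecursiveInSingle.rfind (Nat.RecursiveInSingle.comp .oracle
      (recursiveIn_of_partrec (partrec_of_prim hNCprim))), ?_⟩
  intro n a hka
  have haA : a ∈ OCode.eval ↑(chi A) ca n := by rw [hca]; exact hAe n a hka
  have haB : a ∈ OCode.eval ↑(chi B) cb n := by rw [hcb]; exact hBe n a hka
  have dval : ∀ v, d (NCf (Nat.pair n v)) = Part.some (if v = a then 0 else 1) := by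
    intro v
    have hApt : (if v = a then 0 else 1 : ℕ) ∈ phi (chi A) (enc (cmpCode ca n v)) 0 := by
      rw [phi, ofNat_enc]
      exact cmpCode_eval _ _ _ _ _ haA
    have hBpt : (if v = a then 0 else 1 : ℕ) ∈ phi (chi B) (enc (cmpCode cb n v)) 0 := by
      rw [phi, ofNat_enc]
      exact cmpCode_eval _ _ _ _ _ haB
    have hNCval : NCf (Nat.pair n v) =
        Nat.pair (enc (cmpCode ca n v)) (enc (cmpCode cb n v)) := by
      rw [hNCf]; simp [Nat.unpair_pair]
    rw [hNCval, hd]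
    by_cases hva : v = a
    · subst hva
      rw [if_pos rfl] at hApt hBpt ⊢
      have hP : Nat.pair (enc (cmpCode ca n v)) (enc (cmpCode cb n v)) ∈
          Hset A 0 ⊗ Hset B 0 := ⟨_, hApt, _, hBpt, rfl⟩
      have hnQ : Nat.pair (enc (cmpCode ca n v)) (enc (cmpCode cb n v)) ∉
          Hset A 1 ⊗ Hset B 1 := by
        rintro ⟨p, hp, q, hq, he⟩
        obtain ⟨h1, h2⟩ := Nat.pair_eq_pair.1 he
        subst h1
        exact absurd (Part.mem_unique hApt hp) (by norm_num)
      rw [Part.eq_some_iff, mem_dOracle]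
      exact ⟨Or.inl hP, by rw [if_neg hnQ]⟩
    · rw [if_neg hva] at hApt hBpt ⊢
      have hQ : Nat.pair (enc (cmpCode ca n v)) (enc (cmpCode cb n v)) ∈
          Hset A 1 ⊗ Hset B 1 := ⟨_, hApt, _, hBpt, rfl⟩
      rw [Part.eq_some_iff, mem_dOracle]
      exact ⟨Or.inr hQ, by rw [if_pos hQ]⟩
  show a ∈ Nat.rfind fun v => _
  refine Nat.mem_rfind.2 ?_
  constructor
  · show (true : Bool) ∈ _
    simp only [PFun.coe_val, Part.bind_eq_bind, Part.bind_some, bindP_some, dval a, if_pos rfl]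
    simp
  · intro m hm
    show (false : Bool) ∈ _
    simp only [PFun.coe_val, Part.bind_eq_bind, Part.bind_some, bindP_some, dval m,
      if_neg (Nat.ne_of_lt hm)]
    simp

end Meet16

theorem stmt16 (A B : Set ℕ) :
    T1Reducible (dOracle (Hset A 0 ⊗ Hset B 0) (Hset A 1 ⊗ Hset B 1)) ↑(chi A) ∧
    T1Reducible (dOracle (Hset A 0 ⊗ Hset B 0) (Hset A 1 ⊗ Hset B 1)) ↑(chi B) ∧
    ∀ k : ℕ →. ℕ, T1Reducible k ↑(chi A) → T1Reducible k ↑(chi B) →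
      T1Reducible k (dOracle (Hset A 0 ⊗ Hset B 0) (Hset A 1 ⊗ Hset B 1)) :=
  ⟨Meet16.dOracle_red_left A B, Meet16.dOracle_red_right A B,
    fun k hkA hkB => Meet16.dOracle_meet A B k hkA hkB⟩
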